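/- For every real number z with -1 < z ≤ 0, we have ln(1+z) ≤ 2z/(2+z). -/

import Mathlib

theorem log_one_add_le_of_nonpos (z : ℝ) (hz1 : -1 < z) (hz2 : z ≤ 0) :
    Real.log (1 + z) ≤ 2 * z / (2 + z) := by
  rcases eq_or_lt_of_le hz2 with h0 | hlt
  · subst h0; simp
  · set f : ℝ → ℝ := fun x => 2 * x / (2 + x) - Real.log (1 + x) with hf
    have hderiv : ∀ x ∈ Set.Ioo z (0:ℝ),
        HasDerivAt f (4 / (2 + x) ^ 2 - 1 / (1 + x)) x := by
      intro x hx
      have hx1 : -1 < x := lt_trans hz1 hx.1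
      have h1 : (1 : ℝ) + x ≠ 0 := by linarith [hx.1]
      have h2 : (2 : ℝ) + x ≠ 0 := by linarith [hx.1]
      have hq : HasDerivAt (fun x : ℝ => 2 * x / (2 + x))
          ((2 * (2 + x) - 2 * x * 1) / (2 + x) ^ 2) x := by
        simpa [Pi.div_def] using ((hasDerivAt_id x).const_mul 2).div ((hasDerivAt_id x).const_add 2) h2
      have hl : HasDerivAt (fun x : ℝ => Real.log (1 + x)) ((1 + x)⁻¹ * 1) x := by
        exact (Real.hasDerivAt_log h1).comp x ((hasDerivAt_id x).const_add 1)
      have : HasDerivAt f _ x := hq.sub hl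
      convert this using 1
      field_simp
      ring
    have hcont : ContinuousOn f (Set.Icc z 0) := by
      apply ContinuousOn.sub
      · apply ContinuousOn.div
        · fun_prop
        · fun_prop
        · intro x hx; have := hx.1; nlinarith [hx.2]
      · apply ContinuousOn.comp Real.continuousOn_log (by fun_prop)
        intro x hx
        have := hx.1
        simp only [Set.mem_compl_iff, Set.mem_singleton_iff]
        nlinarith [hx.2]
    have hanti : StrictAntiOn f (Set.Icc z 0) := by
      apply strictAntiOn_of_deriv_neg (convex_Icc z 0) hcont
      intro x hx
      rw [interior_Icc] at hx
      rw [(hderiv x hx).deriv]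
      have hx1 : -1 < x := lt_trans hz1 hx.1
      have h1 : (0:ℝ) < 1 + x := by linarith
      have h2 : (0:ℝ) < 2 + x := by linarith
      have hxne : x < 0 := hx.2
      rw [div_sub_div _ _ (by positivity) (by positivity), div_neg_iff]
      right
      constructor
      · nlinarith
      · positivity
    have h01 : f 0 < f z := by
      exact hanti (Set.left_mem_Icc.mpr (le_of_lt hlt)) (Set.right_mem_Icc.mpr (le_of_lt hlt)) hlt
    have hf0 : f 0 = 0 := by simp [hf]
    have : 0 < f z := by rwa [hf0] at h01
    simp only [hf] at this
    linarith
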